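/- arXiv:2105.04146 — 2 statements merged into one kernel-verified Lean document; each statement's English description precedes it below -/
import Mathlib

section
/- If M₁ and M₂ are distinct maximal matchings of a simple graph G and the symmetric difference graph G[M₁ △ M₂] contains a path component P with an even number of edges (exactly one endpoint of P unmatched in M₁), then letting e₁ be the edge of P ∩ M₂ at the M₁-unmatched endpoint and e₂ the adjacent edge of P ∩ M₁, the set M̂ = (M₁ \ {e₂}) ∪ {e₁} is a matching of G with |M̂| = |M₁| and |M̂ ∩ M₂| > |M₁ ∩ M₂|. -/
open SimpleGraph

variable {V : Type*}

def IsMatchingF (G : SimpleGraph V) (M : Finset (Sym2 V)) : Prop :=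
  (∀ e ∈ M, e ∈ G.edgeSet) ∧
    ∀ e ∈ M, ∀ f ∈ M, e ≠ f → ∀ v : V, v ∈ e → v ∉ f

def IsMaximalMatchingF [DecidableEq V] (G : SimpleGraph V) (M : Finset (Sym2 V)) : Prop :=
  IsMatchingF G M ∧ ∀ e ∈ G.edgeSet, e ∉ M → ¬ IsMatchingF G (insert e M)

/-- `v` is unmatched by the matching `M`. -/
def Unmatched (M : Finset (Sym2 V)) (v : V) : Prop := ∀ e ∈ M, v ∉ e

/-- The graph `G[M₁ △ M₂]` on the symmetric difference of two edge sets. -/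
def sdGraph [DecidableEq V] (M₁ M₂ : Finset (Sym2 V)) : SimpleGraph V where
  Adj v w := v ≠ w ∧ s(v, w) ∈ (M₁ \ M₂) ∪ (M₂ \ M₁)
  symm := ⟨by
    intro v w h
    exact ⟨h.1.symm, by rw [Sym2.eq_swap]; exact h.2⟩⟩
  loopless := ⟨fun v h => h.1 rfl⟩

/-- The walk `p` is a path which is exactly a connected component of `H`
(it spans the component and uses all of its edges, and has at least one edge). -/
def IsPathComponent [DecidableEq V] (H : SimpleGraph V) {u w : V} (p : H.Walk u w) : Prop :=
  p.IsPath ∧ 1 ≤ p.length ∧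
    (∀ x : V, x ∈ p.support ↔ H.connectedComponentMk x = H.connectedComponentMk u) ∧
    (∀ a b : V, H.Adj a b → a ∈ p.support → s(a, b) ∈ p.edges)

/-- The closed walk `p` is a cycle which is exactly a connected component of `H`. -/
def IsCycleComponent [DecidableEq V] (H : SimpleGraph V) {u : V} (p : H.Walk u u) : Prop :=
  p.IsCycle ∧
    (∀ x : V, x ∈ p.support ↔ H.connectedComponentMk x = H.connectedComponentMk u) ∧
    (∀ a b : V, H.Adj a b → a ∈ p.support → s(a, b) ∈ p.edges)

lemma sdGraph_edge_mem [DecidableEq V] (M₁ M₂ : Finset (Sym2 V)) :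
    ∀ e ∈ (sdGraph M₁ M₂).edgeSet, e ∈ (M₁ \ M₂) ∪ (M₂ \ M₁) := by
  intro e
  induction e using Sym2.ind with
  | _ a b => exact fun h => (show a ≠ b ∧ s(a, b) ∈ (M₁ \ M₂) ∪ (M₂ \ M₁) from h).2

theorem stmt3 [DecidableEq V] (G : SimpleGraph V) (M₁ M₂ : Finset (Sym2 V))
    (h₁ : IsMaximalMatchingF G M₁) (h₂ : IsMaximalMatchingF G M₂) (hne : M₁ ≠ M₂)
    (u w : V) (p : (sdGraph M₁ M₂).Walk u w)
    (hp : IsPathComponent (sdGraph M₁ M₂) p) (heven : Even p.length)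
    (hu : Unmatched M₁ u) (hw : ¬ Unmatched M₁ w)
    (e₁ e₂ : Sym2 V)
    (he₁ : e₁ ∈ p.edges ∧ e₁ ∈ M₂ ∧ u ∈ e₁)
    (he₂ : e₂ ∈ p.edges ∧ e₂ ∈ M₁ ∧ e₁ ≠ e₂ ∧ ∃ v : V, v ∈ e₁ ∧ v ∈ e₂) :
    IsMatchingF G (insert e₁ (M₁.erase e₂)) ∧
      (insert e₁ (M₁.erase e₂)).card = M₁.card ∧
      (M₁ ∩ M₂).card < (insert e₁ (M₁.erase e₂) ∩ M₂).card := by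
  obtain ⟨he₁p, he₁M₂, hue₁⟩ := he₁
  obtain ⟨he₂p, he₂M₁, hne12, v, hve₁, hve₂⟩ := he₂
  have hG₁ := h₁.1
  have hG₂ := h₂.1
  have he₁G : e₁ ∈ G.edgeSet := hG₂.1 e₁ he₁M₂
  have he₁nM₁ : e₁ ∉ M₁ := fun h => hu e₁ h hue₁
  have he₂union := sdGraph_edge_mem M₁ M₂ e₂ (p.edges_subset_edgeSet he₂p)
  have he₂nM₂ : e₂ ∉ M₂ := by
    rcases Finset.mem_union.mp he₂union with h | h
    · exact (Finset.mem_sdiff.mp h).2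
    · exact absurd he₂M₁ (Finset.mem_sdiff.mp h).2
  have hvu : v ≠ u := fun h => hu e₂ he₂M₁ (h ▸ hve₂)
  have he₁eq : e₁ = s(u, v) := ((Sym2.mem_and_mem_iff (Ne.symm hvu)).mp ⟨hue₁, hve₁⟩)
  have he₁nE : e₁ ∉ M₁.erase e₂ := fun h => he₁nM₁ (Finset.mem_of_mem_erase h)
  -- key: vertices of e₁ avoid every f ∈ M₁.erase e₂
  have hkey : ∀ f ∈ M₁.erase e₂, ∀ x ∈ e₁, x ∉ f := by
    intro f hf x hx
    have hfM₁ := Finset.mem_of_mem_erase hf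
    have hfne : e₂ ≠ f := fun h => (Finset.ne_of_mem_erase hf) h.symm
    rw [he₁eq] at hx
    rcases Sym2.mem_iff.mp hx with rfl | rfl
    · exact hu f hfM₁
    · exact hG₁.2 e₂ he₂M₁ f hfM₁ hfne x hve₂
  refine ⟨⟨?_, ?_⟩, ?_, ?_⟩
  · intro e he
    rcases Finset.mem_insert.mp he with rfl | he
    · exact he₁G
    · exact hG₁.1 e (Finset.mem_of_mem_erase he)
  · intro e he f hf hef x hxe
    rcases Finset.mem_insert.mp he with rfl | he
    · rcases Finset.mem_insert.mp hf with rfl | hf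
      · exact absurd rfl hef
      · exact hkey f hf x hxe
    · rcases Finset.mem_insert.mp hf with rfl | hf
      · intro hxf; exact hkey e ‹e ∈ M₁.erase e₂› x hxf hxe
      · exact hG₁.2 e (Finset.mem_of_mem_erase ‹e ∈ M₁.erase e₂›) f (Finset.mem_of_mem_erase hf) hef x hxe
  · rw [Finset.card_insert_of_notMem he₁nE, Finset.card_erase_of_mem he₂M₁,
      Nat.sub_add_cancel (Finset.card_pos.mpr ⟨e₂, he₂M₁⟩)]
  · have hinter : insert e₁ (M₁.erase e₂) ∩ M₂ = insert e₁ (M₁ ∩ M₂) := by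
      rw [Finset.insert_inter_of_mem he₁M₂]
      congr 1
      ext x
      simp only [Finset.mem_inter, Finset.mem_erase]
      constructor
      · rintro ⟨⟨_, h⟩, h2⟩; exact ⟨h, h2⟩
      · rintro ⟨h1, h2⟩; exact ⟨⟨fun he => he₂nM₂ (he ▸ h2), h1⟩, h2⟩
    rw [hinter, Finset.card_insert_of_notMem
      (fun h => he₁nM₁ (Finset.mem_inter.mp h).1)]
    exact Nat.lt_succ_self _
end

section
/- Define a directed graph 𝒢 whose nodes are the maximal matchings of a simple graph G, with an arc from M to M' whenever M' = complete((M \ Γ(e)) ∪ {e}) for some edge e ∉ M, where complete extends a matching greedily to a maximal matching. Then 𝒢 is strongly connected. -/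
open SimpleGraph

variable {V : Type*}

/-- `M` minus all edges sharing an endpoint with `e` (i.e. `M \ Γ(e)` for `e ∉ M`). -/
def removeAdj [Fintype V] [DecidableEq V] (M : Finset (Sym2 V)) (e : Sym2 V) :
    Finset (Sym2 V) :=
  M.filter fun f => ¬ ∃ v : V, v ∈ e ∧ v ∈ f

/-- `comp` greedily extends any matching of `G` to a maximal matching containing it. -/
def CompletionFun [DecidableEq V] (G : SimpleGraph V)
    (comp : Finset (Sym2 V) → Finset (Sym2 V)) : Prop :=
  ∀ M : Finset (Sym2 V), IsMatchingF G M → M ⊆ comp M ∧ IsMaximalMatchingF G (comp M)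

/-- The arcs of the solution graph 𝒢: from `M` to `comp((M \ Γ(e)) ∪ {e})` for `e ∉ M`. -/
def GStep [Fintype V] [DecidableEq V] (G : SimpleGraph V)
    (comp : Finset (Sym2 V) → Finset (Sym2 V)) (M M' : Finset (Sym2 V)) : Prop :=
  ∃ e ∈ G.edgeSet, e ∉ M ∧ M' = comp (insert e (removeAdj M e))

theorem stmt8 [Fintype V] [DecidableEq V] (G : SimpleGraph V)
    (comp : Finset (Sym2 V) → Finset (Sym2 V)) (hcomp : CompletionFun G comp)
    (M₁ M₂ : Finset (Sym2 V))
    (h₁ : IsMaximalMatchingF G M₁) (h₂ : IsMaximalMatchingF G M₂) :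
    Relation.ReflTransGen (GStep G comp) M₁ M₂ := by
  -- key: if M₂ ⊆ N with N a matching, then N = M₂ by maximality of M₂
  have key : ∀ N : Finset (Sym2 V), IsMaximalMatchingF G N → M₂ ⊆ N → N = M₂ := by
    intro N hN hsub
    apply Finset.Subset.antisymm _ hsub
    intro f hf
    by_contra hfM₂
    refine h₂.2 f (hN.1.1 f hf) hfM₂ ?_
    have memN : ∀ a, a ∈ insert f M₂ → a ∈ N := by
      intro a ha
      rcases Finset.mem_insert.mp ha with h' | h'
      · rw [h']; exact hf
      · exact hsub h'
    exact ⟨fun a ha => hN.1.1 a (memN a ha),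
      fun a ha b hb hab v hva => hN.1.2 a (memN a ha) b (memN b hb) hab v hva⟩
  suffices H : ∀ n (N : Finset (Sym2 V)), (M₂ \ N).card ≤ n →
      IsMaximalMatchingF G N → Relation.ReflTransGen (GStep G comp) N M₂ by
    exact H _ M₁ le_rfl h₁
  intro n
  induction n with
  | zero =>
    intro N hcard hN
    have hsub : M₂ ⊆ N := by
      intro f hf
      by_contra hfN
      have : f ∈ M₂ \ N := Finset.mem_sdiff.mpr ⟨hf, hfN⟩
      simp [Finset.card_eq_zero.mp (Nat.le_zero.mp hcard)] at this
    rw [key N hN hsub]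
  | succ n ih =>
    intro N hcard hN
    by_cases hsub : M₂ ⊆ N
    · rw [key N hN hsub]
    · obtain ⟨e, heM₂, heN⟩ := Finset.not_subset.mp hsub
      have heG : e ∈ G.edgeSet := h₂.1.1 e heM₂
      set P : Finset (Sym2 V) := insert e (removeAdj N e) with hP
      have hPmem : ∀ f ∈ removeAdj N e, f ∈ N ∧ ¬ ∃ v : V, v ∈ e ∧ v ∈ f := by
        intro f hf
        exact Finset.mem_filter.mp hf
      have hPmatch : IsMatchingF G P := by
        constructor
        · intro a ha
          rcases Finset.mem_insert.mp ha with rfl | ha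
          · exact heG
          · exact hN.1.1 a (hPmem a ha).1
        · intro a ha b hb hab v hva
          rcases Finset.mem_insert.mp ha with rfl | ha <;>
            rcases Finset.mem_insert.mp hb with rfl | hb
          · exact absurd rfl hab
          · exact fun hvb => (hPmem b hb).2 ⟨v, hva, hvb⟩
          · exact fun hvb => (hPmem a ha).2 ⟨v, hvb, hva⟩
          · exact hN.1.2 a (hPmem a ha).1 b (hPmem b hb).1 hab v hva
      obtain ⟨hPsub, hPmax⟩ := hcomp P hPmatch
      refine Relation.ReflTransGen.head ⟨e, heG, heN, rfl⟩ (ih (comp P) ?_ hPmax)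
      -- measure decreases: M₂ \ comp P ⊆ (M₂ \ N).erase e
      have hss : M₂ \ comp P ⊆ (M₂ \ N).erase e := by
        intro f hf
        obtain ⟨hfM₂, hfC⟩ := Finset.mem_sdiff.mp hf
        have hfe : f ≠ e := by
          rintro rfl
          exact hfC (hPsub (Finset.mem_insert_self _ _))
        refine Finset.mem_erase.mpr ⟨hfe, Finset.mem_sdiff.mpr ⟨hfM₂, ?_⟩⟩
        intro hfN
        apply hfC
        apply hPsub
        refine Finset.mem_insert_of_mem (Finset.mem_filter.mpr ⟨hfN, ?_⟩)
        rintro ⟨v, hve, hvf⟩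
        have hne : e ≠ f := fun h => hfe h.symm
        exact h₂.1.2 e heM₂ f hfM₂ hne v hve hvf
      have heMN : e ∈ M₂ \ N := Finset.mem_sdiff.mpr ⟨heM₂, heN⟩
      calc (M₂ \ comp P).card ≤ ((M₂ \ N).erase e).card := Finset.card_le_card hss
        _ = (M₂ \ N).card - 1 := Finset.card_erase_of_mem heMN
        _ ≤ n := by omega
end
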